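/- Under the assumptions of the delay-substitution lemma (existence of h* < ∞ with μ(I_{s,Δ}) ≤ h*·Δ asymptotically), the constant h* satisfies h* ≥ 1. -/
import Mathlib


open MeasureTheory Set

/-- Under the assumptions of the delay-substitution lemma (the Lebesgue measure of
`I_{s,Δ} = {t ≥ 0 : t - h t ∈ [s, s+Δ)}` is at most `hstar * Δ` for all sufficiently
small `Δ > 0` and all `s ≥ -τ`), the constant `hstar` satisfies `hstar ≥ 1`. -/
theorem hstar_ge_one
    (h' τ hstar : ℝ) (h : ℝ → ℝ)
    (hh' : 0 < h') (hτ : h' ≤ τ)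
    (hmeas : Measurable h)
    (hrange : ∀ t, h t ∈ Set.Icc h' τ)
    (hbound : ∃ Δ₀ > 0, ∀ Δ : ℝ, 0 < Δ → Δ < Δ₀ → ∀ s : ℝ, -τ ≤ s →
      volume {t : ℝ | 0 ≤ t ∧ s ≤ t - h t ∧ t - h t < s + Δ} ≤ ENNReal.ofReal (hstar * Δ)) :
    1 ≤ hstar := by
  obtain ⟨Δ₀, hΔ₀, hb⟩ := hbound
  set Δ : ℝ := Δ₀ / 2 with hΔdef
  have hΔ : 0 < Δ := by positivity
  have hΔlt : Δ < Δ₀ := by simp only [hΔdef]; linarith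
  have hτ0 : 0 < τ := lt_of_lt_of_le hh' hτ
  have key : ∀ n : ℕ, ENNReal.ofReal (n : ℝ) ≤
      (⌈((n : ℝ) + τ) / Δ⌉₊ : ENNReal) * ENNReal.ofReal (hstar * Δ) := by
    intro n
    set N : ℕ := ⌈((n : ℝ) + τ) / Δ⌉₊ with hN
    have hcover : Icc (0:ℝ) n ⊆ ⋃ k ∈ Finset.range N,
        {t : ℝ | 0 ≤ t ∧ (-τ + k * Δ) ≤ t - h t ∧ t - h t < (-τ + k * Δ) + Δ} := by
      intro t ht
      obtain ⟨ht0, htn⟩ := ht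
      have hht := hrange t
      have hx1 : -τ ≤ t - h t := by have := hht.2; linarith
      have hx2 : t - h t < n := by have := hht.1; linarith
      have hxpos : 0 ≤ t - h t + τ := by linarith
      set k : ℕ := ⌊(t - h t + τ) / Δ⌋₊ with hk
      have h1 : (k : ℝ) * Δ ≤ t - h t + τ := by
        have h0 := Nat.floor_le (div_nonneg hxpos hΔ.le)
        have := div_mul_cancel₀ (t - h t + τ) hΔ.ne'
        nlinarith
      have h2 : t - h t + τ < ((k : ℝ) + 1) * Δ := by
        have h0 := Nat.lt_floor_add_one ((t - h t + τ) / Δ)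
        have := div_mul_cancel₀ (t - h t + τ) hΔ.ne'
        nlinarith
      have hNle : (n : ℝ) + τ ≤ (N : ℝ) * Δ := by
        have h0 := Nat.le_ceil (((n:ℝ) + τ) / Δ)
        have := div_mul_cancel₀ ((n:ℝ) + τ) hΔ.ne'
        nlinarith
      have hkN : k < N := by
        by_contra hc
        push_neg at hc
        have hNk : (N : ℝ) ≤ (k : ℝ) := Nat.cast_le.mpr hc
        nlinarith
      refine Set.mem_biUnion (Finset.mem_range.mpr hkN) ?_
      refine ⟨ht0, by linarith, by linarith⟩
    calc ENNReal.ofReal (n:ℝ) = volume (Icc (0:ℝ) n) := by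
          rw [Real.volume_Icc]; norm_num
      _ ≤ volume (⋃ k ∈ Finset.range N,
            {t : ℝ | 0 ≤ t ∧ (-τ + k * Δ) ≤ t - h t ∧ t - h t < (-τ + k * Δ) + Δ}) :=
          measure_mono hcover
      _ ≤ ∑ k ∈ Finset.range N, volume
            {t : ℝ | 0 ≤ t ∧ (-τ + (k:ℝ) * Δ) ≤ t - h t ∧ t - h t < (-τ + (k:ℝ) * Δ) + Δ} :=
          measure_biUnion_finset_le _ _
      _ ≤ ∑ k ∈ Finset.range N, ENNReal.ofReal (hstar * Δ) := by
          refine Finset.sum_le_sum fun k _ => ?_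
          refine hb Δ hΔ hΔlt _ ?_
          have : (0:ℝ) ≤ (k:ℝ) * Δ := by positivity
          linarith
      _ = (N : ENNReal) * ENNReal.ofReal (hstar * Δ) := by
          rw [Finset.sum_const, Finset.card_range, nsmul_eq_mul]
  -- hstar * Δ is positive
  have hpos : 0 < hstar * Δ := by
    by_contra hc
    push_neg at hc
    have h1 := key 1
    rw [ENNReal.ofReal_eq_zero.mpr hc, mul_zero] at h1
    simp at h1
  have hstar0 : 0 < hstar := by
    rcases mul_pos_iff.mp hpos with ⟨h1, _⟩ | ⟨_, h2⟩
    · exact h1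
    · linarith
  -- real version of key
  have keyR : ∀ n : ℕ, (n : ℝ) ≤ hstar * ((n : ℝ) + τ + Δ) := by
    intro n
    set N : ℕ := ⌈((n : ℝ) + τ) / Δ⌉₊ with hN
    have h1 : ENNReal.ofReal (n : ℝ) ≤ ENNReal.ofReal ((N : ℝ) * (hstar * Δ)) := by
      calc ENNReal.ofReal (n : ℝ) ≤ (N : ENNReal) * ENNReal.ofReal (hstar * Δ) := key n
        _ = ENNReal.ofReal (N : ℝ) * ENNReal.ofReal (hstar * Δ) := by
            rw [ENNReal.ofReal_natCast]
        _ = ENNReal.ofReal ((N : ℝ) * (hstar * Δ)) :=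
            (ENNReal.ofReal_mul (by positivity)).symm
    have h2 : (n : ℝ) ≤ (N : ℝ) * (hstar * Δ) := by
      have := (ENNReal.ofReal_le_ofReal_iff (by positivity)).mp h1
      exact this
    have hNub : (N : ℝ) * Δ < (n : ℝ) + τ + Δ := by
      have h0 : (N : ℝ) < ((n:ℝ) + τ) / Δ + 1 :=
        Nat.ceil_lt_add_one (by positivity)
      have := div_mul_cancel₀ ((n:ℝ) + τ) hΔ.ne'
      nlinarith
    nlinarith
  -- conclude
  by_contra hc
  push_neg at hc
  obtain ⟨n, hn⟩ := exists_nat_gt (hstar * (τ + Δ) / (1 - hstar))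
  have hkn := keyR n
  have h1s : 0 < 1 - hstar := by linarith
  have : (n : ℝ) * (1 - hstar) ≤ hstar * (τ + Δ) := by nlinarith
  have : (n : ℝ) ≤ hstar * (τ + Δ) / (1 - hstar) := by
    rw [le_div_iff₀ h1s]; linarith [this]
  linarith
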